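/- arXiv:2009.10581 — 2 statements merged into one kernel-verified Lean document; each statement's English description precedes it below -/
import Mathlib

section
/- For real t, s with 0 < t ≤ s, α > 0, and any integer l ≥ 0, the remainder of the Taylor polynomial of t ↦ t^(-α) at s satisfies 0 ≤ t^(-α) − P_l(t;s) ≤ t^(-α), where P_l(t;s) = ∑_{k=0}^{l} (∏_{j=0}^{k-1}(α+j)) / s^(α+k) · (s-t)^k / k!. -/
open Finset

/-- Taylor coefficient `(α)_k / k!`. -/
noncomputable def taylorC (α : ℝ) (k : ℕ) : ℝ :=
  (∏ j ∈ Finset.range k, (α + (j : ℝ))) / (k.factorial : ℝ)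

lemma taylorC_zero (α : ℝ) : taylorC α 0 = 1 := by simp [taylorC]

lemma taylorC_nonneg {α : ℝ} (hα : 0 ≤ α) (k : ℕ) : 0 ≤ taylorC α k := by
  apply div_nonneg _ (by positivity)
  exact Finset.prod_nonneg fun j _ => by positivity

lemma taylorC_succ (α : ℝ) (k : ℕ) :
    taylorC α (k + 1) = taylorC α k * (α + k) / (k + 1) := by
  simp only [taylorC, Finset.prod_range_succ, Nat.factorial_succ]
  have h1 : (k.factorial : ℝ) ≠ 0 := by positivity
  have h2 : ((k : ℝ) + 1) ≠ 0 := by positivity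
  push_cast
  field_simp

/-- The telescoping identity `(1-u)·S'(u) - α·S(u) = -(l+1)·c_{l+1}·u^l`. -/
lemma taylor_telescope (α : ℝ) (l : ℕ) (u : ℝ) :
    ∑ k ∈ Finset.range (l + 1),
        taylorC α k * ((1 - u) * ((k : ℝ) * u ^ (k - 1)) - α * u ^ k)
      = -((l : ℝ) + 1) * taylorC α (l + 1) * u ^ l := by
  induction l with
  | zero =>
      simp [taylorC_zero, taylorC_succ, taylorC]
  | succ n ih =>
      rw [Finset.sum_range_succ, ih]
      have hs : n + 1 - 1 = n := rfl
      rw [hs, taylorC_succ α (n + 1)]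
      have h2 : ((n : ℝ) + 1 + 1) ≠ 0 := by positivity
      push_cast
      field_simp
      ring

/-- Key inequality: partial sums of the binomial series satisfy
`S_l(x) · (1-x)^α ≤ 1` for `0 ≤ x < 1`. -/
lemma taylor_partial_sum_le {α : ℝ} (hα : 0 < α) (l : ℕ) {x : ℝ}
    (hx0 : 0 ≤ x) (hx1 : x < 1) :
    (∑ k ∈ Finset.range (l + 1), taylorC α k * x ^ k) * (1 - x) ^ α ≤ 1 := by
  set f : ℝ → ℝ := fun u => (∑ k ∈ Finset.range (l + 1), taylorC α k * u ^ k) * (1 - u) ^ α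
    with hf
  -- derivative of f at any u with 1 - u > 0
  have hderiv : ∀ u : ℝ, 1 - u > 0 → HasDerivAt f
      ((∑ k ∈ Finset.range (l + 1), taylorC α k * ((k : ℝ) * u ^ (k - 1))) * (1 - u) ^ α
        + (∑ k ∈ Finset.range (l + 1), taylorC α k * u ^ k)
          * (α * (1 - u) ^ (α - 1) * (-1))) u := by
    intro u hu
    have h1 : HasDerivAt (fun u : ℝ => ∑ k ∈ Finset.range (l + 1), taylorC α k * u ^ k)
        (∑ k ∈ Finset.range (l + 1), taylorC α k * ((k : ℝ) * u ^ (k - 1))) u := by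
      apply HasDerivAt.fun_sum
      intro k _
      exact (hasDerivAt_pow k u).const_mul _
    have hg : HasDerivAt (fun u : ℝ => 1 - u) (-1) u := by
      simpa using (hasDerivAt_id u).const_sub 1
    have h2 : HasDerivAt (fun u : ℝ => (1 - u) ^ α) (α * (1 - u) ^ (α - 1) * (-1)) u :=
      (Real.hasDerivAt_rpow_const (p := α) (Or.inl (ne_of_gt hu))).comp u hg
    exact h1.mul h2
  -- derivative value is nonpositive on [0, x]
  have hderiv_nonpos : ∀ u : ℝ, 0 ≤ u → 1 - u > 0 → deriv f u ≤ 0 := by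
    intro u hu0 hu1
    rw [(hderiv u hu1).deriv]
    have hrw : (∑ k ∈ Finset.range (l + 1), taylorC α k * ((k : ℝ) * u ^ (k - 1)))
          * (1 - u) ^ α
        + (∑ k ∈ Finset.range (l + 1), taylorC α k * u ^ k)
          * (α * (1 - u) ^ (α - 1) * (-1))
        = (1 - u) ^ (α - 1) *
          (∑ k ∈ Finset.range (l + 1),
            taylorC α k * ((1 - u) * ((k : ℝ) * u ^ (k - 1)) - α * u ^ k)) := by
      have hpow : (1 - u) ^ α = (1 - u) ^ (α - 1) * (1 - u) := by
        have h := Real.rpow_add hu1 (α - 1) 1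
        rw [Real.rpow_one] at h
        rw [← h]
        norm_num
      rw [hpow]
      rw [Finset.mul_sum]
      rw [Finset.sum_mul, Finset.sum_mul, ← Finset.sum_add_distrib]
      apply Finset.sum_congr rfl
      intro k _
      ring
    rw [hrw, taylor_telescope]
    have h1 : (0 : ℝ) ≤ (1 - u) ^ (α - 1) := Real.rpow_nonneg hu1.le _
    have h2 : (0 : ℝ) ≤ ((l : ℝ) + 1) * taylorC α (l + 1) * u ^ l := by
      have := taylorC_nonneg hα.le (l + 1)
      positivity
    nlinarith
  -- f is antitone on [0, x]
  have hsub : Set.Icc (0 : ℝ) x ⊆ {u : ℝ | 1 - u > 0} := by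
    intro u hu
    simp only [Set.mem_setOf_eq]
    linarith [hu.2]
  have hanti : AntitoneOn f (Set.Icc 0 x) := by
    apply antitoneOn_of_deriv_nonpos (convex_Icc 0 x)
    · intro u hu
      exact ((hderiv u (hsub hu)).differentiableAt).continuousAt.continuousWithinAt
    · intro u hu
      rw [interior_Icc] at hu
      exact ((hderiv u (by linarith [hu.2] : 1 - u > 0)).differentiableAt).differentiableWithinAt
    · intro u hu
      rw [interior_Icc] at hu
      exact hderiv_nonpos u hu.1.le (by linarith [hu.2])
  have h0 : f 0 = 1 := by
    have hsum : (∑ k ∈ Finset.range (l + 1), taylorC α k * (0 : ℝ) ^ k) = 1 := by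
      rw [Finset.sum_eq_single 0]
      · simp [taylorC_zero]
      · intro k _ hk
        simp [zero_pow hk]
      · simp
    simp [hf, hsum]
  have hle : f x ≤ f 0 :=
    hanti (Set.left_mem_Icc.2 hx0) (Set.right_mem_Icc.2 hx0) hx0
  rw [h0] at hle
  exact hle

/-- For `0 < t ≤ s`, `α > 0`, the remainder of the degree-`l` Taylor polynomial of
`t ↦ t^(-α)` at `s` satisfies `0 ≤ t^(-α) − P_l(t;s) ≤ t^(-α)`. -/
theorem taylor_remainder_bounds (α t s : ℝ) (hα : 0 < α) (ht : 0 < t) (hts : t ≤ s) (l : ℕ) :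
    0 ≤ t ^ (-α) - ∑ k ∈ Finset.range (l + 1),
        (∏ j ∈ Finset.range k, (α + (j : ℝ))) / s ^ (α + (k : ℝ)) *
          ((s - t) ^ k / (k.factorial : ℝ)) ∧
    t ^ (-α) - ∑ k ∈ Finset.range (l + 1),
        (∏ j ∈ Finset.range k, (α + (j : ℝ))) / s ^ (α + (k : ℝ)) *
          ((s - t) ^ k / (k.factorial : ℝ)) ≤ t ^ (-α) := by
  have hs : 0 < s := lt_of_lt_of_le ht hts
  set x : ℝ := (s - t) / s with hxdef
  have hx0 : 0 ≤ x := div_nonneg (by linarith) hs.le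
  have hx1 : x < 1 := by
    rw [hxdef, div_lt_one hs]; linarith
  have h1x : 1 - x = t / s := by
    rw [hxdef, eq_div_iff hs.ne', sub_mul, div_mul_cancel₀ _ hs.ne']; ring
  -- rewrite each summand
  have hterm : ∀ k : ℕ,
      (∏ j ∈ Finset.range k, (α + (j : ℝ))) / s ^ (α + (k : ℝ)) *
        ((s - t) ^ k / (k.factorial : ℝ)) = s ^ (-α) * (taylorC α k * x ^ k) := by
    intro k
    have hsplit : s ^ (α + (k : ℝ)) = s ^ α * s ^ k := by
      rw [Real.rpow_add hs, Real.rpow_natCast]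
    have hneg : s ^ (-α) = (s ^ α)⁻¹ := by
      rw [Real.rpow_neg hs.le]
    have hxk : x ^ k = (s - t) ^ k / s ^ k := by
      rw [hxdef, div_pow]
    rw [hsplit, hneg, hxk, taylorC]
    have h1 : (s : ℝ) ^ α ≠ 0 := by positivity
    have h2 : (s : ℝ) ^ k ≠ 0 := by positivity
    have h3 : (k.factorial : ℝ) ≠ 0 := by positivity
    field_simp
  have hsum : (∑ k ∈ Finset.range (l + 1),
      (∏ j ∈ Finset.range k, (α + (j : ℝ))) / s ^ (α + (k : ℝ)) *
        ((s - t) ^ k / (k.factorial : ℝ)))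
      = s ^ (-α) * ∑ k ∈ Finset.range (l + 1), taylorC α k * x ^ k := by
    rw [Finset.mul_sum]
    exact Finset.sum_congr rfl fun k _ => hterm k
  constructor
  · -- upper bound on the sum : sum ≤ t^(-α)
    rw [hsum, sub_nonneg]
    have hkey := taylor_partial_sum_le hα l hx0 hx1
    have hpow : (0 : ℝ) < (1 - x) ^ α := by
      have : (0 : ℝ) < 1 - x := by linarith
      positivity
    have h1xpos : (0 : ℝ) < 1 - x := by linarith
    have hS : (∑ k ∈ Finset.range (l + 1), taylorC α k * x ^ k) ≤ (1 - x) ^ (-α) := by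
      rw [Real.rpow_neg h1xpos.le, inv_eq_one_div, le_div_iff₀ hpow]
      exact hkey
    calc s ^ (-α) * (∑ k ∈ Finset.range (l + 1), taylorC α k * x ^ k)
        ≤ s ^ (-α) * (1 - x) ^ (-α) :=
          mul_le_mul_of_nonneg_left hS (Real.rpow_nonneg hs.le _)
      _ = t ^ (-α) := by
          rw [h1x, ← Real.mul_rpow hs.le (div_nonneg ht.le hs.le),
            mul_div_cancel₀ t (ne_of_gt hs)]
  · -- lower bound: sum ≥ 0
    rw [sub_le_self_iff]
    apply Finset.sum_nonneg
    intro k _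
    have hprod : 0 ≤ ∏ j ∈ Finset.range k, (α + (j : ℝ)) :=
      Finset.prod_nonneg fun j _ => by positivity
    have h1 : (0 : ℝ) < s ^ (α + (k : ℝ)) := Real.rpow_pos_of_pos hs _
    have h2 : (0 : ℝ) ≤ (s - t) ^ k := pow_nonneg (by linarith) k
    have h3 : (0 : ℝ) < (k.factorial : ℝ) := by positivity
    positivity
end

section
/- For fixed s > 0, α > 0, integers l ≥ 0 and 0 ≤ j ≤ l+1, and 0 < t ≤ s, the j-th derivative of f_{α,l}(t) = t^(-α) − P_l(t;s) satisfies |d^j/dt^j f_{α,l}(t)| ≤ |d^j/dt^j t^(-α)| = (∏_{i=0}^{j-1}(α+i)) t^(-(α+j)). -/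
open Finset

noncomputable def gfun (s β : ℝ) (N : ℕ) (t : ℝ) : ℝ :=
  t ^ (-β) - ∑ m ∈ Finset.range N,
    (∏ i ∈ Finset.range m, (β + (i : ℝ))) / s ^ (β + (m : ℝ)) *
      ((s - t) ^ m / (m.factorial : ℝ))

lemma gfun_hasDerivAt (s β : ℝ) (N : ℕ) (t : ℝ) (ht : 0 < t) :
    HasDerivAt (gfun s β (N + 1)) (-β * gfun s (β + 1) N t) t := by
  have h1 : HasDerivAt (fun τ : ℝ => τ ^ (-β)) (-β * t ^ (-β - 1)) t :=
    Real.hasDerivAt_rpow_const (Or.inl ht.ne')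
  have h2 : ∀ m : ℕ, HasDerivAt (fun τ : ℝ =>
      (∏ i ∈ Finset.range m, (β + (i : ℝ))) / s ^ (β + (m : ℝ)) *
        ((s - τ) ^ m / (m.factorial : ℝ)))
      ((∏ i ∈ Finset.range m, (β + (i : ℝ))) / s ^ (β + (m : ℝ)) *
        ((m : ℝ) * (s - t) ^ (m - 1) * (-1) / (m.factorial : ℝ))) t := by
    intro m
    exact ((((hasDerivAt_id t).const_sub s).pow m).div_const _).const_mul _
  have hsum := HasDerivAt.fun_sum (fun m (_ : m ∈ Finset.range (N + 1)) => h2 m)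
  have h := h1.fun_sub hsum
  refine (h.congr_deriv ?_ : HasDerivAt (gfun s β (N + 1)) _ t)
  symm
  show -β * gfun s (β + 1) N t = -β * t ^ (-β - 1) - _
  unfold gfun
  have h0 : (∏ i ∈ Finset.range 0, (β + (i : ℝ))) / s ^ (β + ((0:ℕ) : ℝ)) *
      (((0:ℕ) : ℝ) * (s - t) ^ (0 - 1) * (-1) / ((0:ℕ).factorial : ℝ)) = 0 := by
    simp
  have hterm : ∀ m ∈ Finset.range N,
      (∏ i ∈ Finset.range (m + 1), (β + ((i : ℕ) : ℝ))) / s ^ (β + ((m + 1 : ℕ) : ℝ)) *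
        (((m + 1 : ℕ) : ℝ) * (s - t) ^ (m + 1 - 1) * (-1) / ((m + 1).factorial : ℝ))
      = -β * ((∏ i ∈ Finset.range m, (β + 1 + (i : ℝ))) / s ^ (β + 1 + (m : ℝ)) *
        ((s - t) ^ m / (m.factorial : ℝ))) := by
    intro m _
    have hexp : β + ((m + 1 : ℕ) : ℝ) = β + 1 + (m : ℝ) := by push_cast; ring
    have hprod : (∏ i ∈ Finset.range (m + 1), (β + ((i : ℕ) : ℝ)))
        = (∏ i ∈ Finset.range m, (β + 1 + (i : ℝ))) * β := by
      rw [Finset.prod_range_succ']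
      congr 1
      · exact Finset.prod_congr rfl fun i _ => by push_cast; ring
      · simp
    have hcast : (((m + 1).factorial : ℕ) : ℝ) = ((m : ℝ) + 1) * (m.factorial : ℝ) := by
      rw [Nat.factorial_succ]; push_cast; ring
    have hm1 : ((m : ℝ) + 1) ≠ 0 := by positivity
    have hsucc : m + 1 - 1 = m := rfl
    have hcast2 : ((m + 1 : ℕ) : ℝ) = (m : ℝ) + 1 := by push_cast; ring
    rw [hexp, hprod, hcast, hsucc, hcast2]
    have hcan : ((m : ℝ) + 1) * (s - t) ^ m * (-1) / (((m : ℝ) + 1) * (m.factorial : ℝ))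
        = (s - t) ^ m * (-1) / (m.factorial : ℝ) := by
      rw [mul_assoc, mul_div_mul_left _ _ hm1]
    rw [hcan]
    ring
  rw [Finset.sum_range_succ', h0, add_zero, Finset.sum_congr rfl hterm, ← Finset.mul_sum]
  have hrw : -(β + 1) = -β - 1 := by ring
  rw [hrw]
  ring

lemma gfun_nonneg (s : ℝ) (hs : 0 < s) :
    ∀ (N : ℕ) (β : ℝ), 0 < β → ∀ t, 0 < t → t ≤ s → 0 ≤ gfun s β N t := by
  intro N
  induction N with
  | zero =>
    intro β hβ t ht hts
    simp only [gfun, Finset.range_zero, Finset.sum_empty, sub_zero]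
    exact Real.rpow_nonneg ht.le _
  | succ N ih =>
    intro β hβ t ht hts
    have hval : gfun s β (N + 1) s = 0 := by
      simp only [gfun]
      rw [Finset.sum_eq_single 0]
      · simp [Real.rpow_neg hs.le]
      · intro m _ hm
        simp [sub_self, zero_pow hm]
      · simp
    have hanti : AntitoneOn (gfun s β (N + 1)) (Set.Icc t s) := by
      apply antitoneOn_of_deriv_nonpos (convex_Icc t s)
      · intro x hx
        exact ((gfun_hasDerivAt s β N x (lt_of_lt_of_le ht hx.1)).continuousAt).continuousWithinAt
      · intro x hx
        rw [interior_Icc] at hx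
        exact ((gfun_hasDerivAt s β N x (ht.trans hx.1)).differentiableAt).differentiableWithinAt
      · intro x hx
        rw [interior_Icc] at hx
        have hx0 : 0 < x := ht.trans hx.1
        rw [(gfun_hasDerivAt s β N x hx0).deriv]
        have hg := ih (β + 1) (by linarith) x hx0 hx.2.le
        nlinarith
    have := hanti (Set.mem_Icc.2 ⟨le_refl t, hts⟩) (Set.mem_Icc.2 ⟨hts, le_refl s⟩) hts
    rw [hval] at this
    exact this

lemma iter_eq (α s : ℝ) (hs : 0 < s) (hα : 0 < α) (l : ℕ) :
    ∀ j, j ≤ l + 1 → ∀ t : ℝ, 0 < t →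
      iteratedDeriv j (fun τ : ℝ => τ ^ (-α) - ∑ k ∈ Finset.range (l + 1),
        (∏ i ∈ Finset.range k, (α + (i : ℝ))) / s ^ (α + (k : ℝ)) *
          ((s - τ) ^ k / (k.factorial : ℝ))) t
      = (-1 : ℝ) ^ j * (∏ i ∈ Finset.range j, (α + (i : ℝ))) * gfun s (α + j) (l + 1 - j) t := by
  intro j
  induction j with
  | zero =>
    intro _ t ht
    simp [gfun, iteratedDeriv_zero]
  | succ j ih =>
    intro hj t ht
    have hjl : j ≤ l := by omega
    rw [iteratedDeriv_succ]
    have hEq : Set.EqOn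
        (iteratedDeriv j (fun τ : ℝ => τ ^ (-α) - ∑ k ∈ Finset.range (l + 1),
          (∏ i ∈ Finset.range k, (α + (i : ℝ))) / s ^ (α + (k : ℝ)) *
            ((s - τ) ^ k / (k.factorial : ℝ))))
        (fun t => (-1 : ℝ) ^ j * (∏ i ∈ Finset.range j, (α + (i : ℝ))) *
          gfun s (α + j) (l + 1 - j) t) (Set.Ioi 0) :=
      fun x hx => ih (by omega) x hx
    rw [Filter.EventuallyEq.deriv_eq (hEq.eventuallyEq_of_mem (Ioi_mem_nhds ht))]
    have hN : l + 1 - j = (l - j) + 1 := by omega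
    have hd : HasDerivAt (fun t => (-1 : ℝ) ^ j * (∏ i ∈ Finset.range j, (α + (i : ℝ))) *
        gfun s (α + j) ((l - j) + 1) t)
        ((-1 : ℝ) ^ j * (∏ i ∈ Finset.range j, (α + (i : ℝ))) *
          (-(α + j) * gfun s (α + j + 1) (l - j) t)) t :=
      (gfun_hasDerivAt s (α + j) (l - j) t ht).const_mul _
    rw [hN]
    rw [hd.deriv]
    have hc : α + ((j + 1 : ℕ) : ℝ) = α + (j : ℝ) + 1 := by push_cast; ring
    have hN2 : l + 1 - (j + 1) = l - j := by omega
    rw [hc, hN2, Finset.prod_range_succ, pow_succ]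
    ring

/-- For `0 < t ≤ s` and `j ≤ l + 1`, the `j`-th derivative of the Taylor remainder
`f_{α,l}(t) = t^(-α) − P_l(t;s)` is bounded in absolute value by the `j`-th derivative
of `t^(-α)`, namely `(∏_{i<j}(α+i)) t^(-(α+j))`. -/
theorem iteratedDeriv_taylor_remainder_bound (α s : ℝ) (hs : 0 < s) (hα : 0 < α)
    (l j : ℕ) (hj : j ≤ l + 1) (t : ℝ) (ht : 0 < t) (hts : t ≤ s) :
    |iteratedDeriv j (fun τ : ℝ => τ ^ (-α) - ∑ k ∈ Finset.range (l + 1),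
        (∏ i ∈ Finset.range k, (α + (i : ℝ))) / s ^ (α + (k : ℝ)) *
          ((s - τ) ^ k / (k.factorial : ℝ))) t|
      ≤ (∏ i ∈ Finset.range j, (α + (i : ℝ))) * t ^ (-(α + (j : ℝ))) := by
  rw [iter_eq α s hs hα l j hj t ht]
  have hP : 0 ≤ ∏ i ∈ Finset.range j, (α + (i : ℝ)) :=
    Finset.prod_nonneg fun i _ => by positivity
  rw [abs_mul, abs_mul, abs_pow, abs_neg, abs_one, one_pow, one_mul, abs_of_nonneg hP]
  apply mul_le_mul_of_nonneg_left _ hP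
  have hβ : 0 < α + (j : ℝ) := by positivity
  have hg0 := gfun_nonneg s hs (l + 1 - j) (α + j) hβ t ht hts
  rw [abs_of_nonneg hg0]
  have hS : 0 ≤ ∑ m ∈ Finset.range (l + 1 - j),
      (∏ i ∈ Finset.range m, (α + (j : ℝ) + (i : ℝ))) / s ^ (α + (j : ℝ) + (m : ℝ)) *
        ((s - t) ^ m / (m.factorial : ℝ)) := by
    apply Finset.sum_nonneg
    intro m _
    have h1 : (0:ℝ) ≤ ∏ i ∈ Finset.range m, (α + (j : ℝ) + (i : ℝ)) :=
      Finset.prod_nonneg fun i _ => by positivity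
    have h2 : (0:ℝ) ≤ (s - t) ^ m := pow_nonneg (by linarith) m
    positivity
  unfold gfun
  linarith
end
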